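/- For n ≥ 0, n! · Σ_{F∈F(n)} Π_{v∈V(F)} 1/h_v = (2n−1)!!, the product of the odd numbers 1·3·5···(2n−1). -/

import Mathlib

open Polynomial

inductive PlaneTree : Type where
  | node : List PlaneTree → PlaneTree

namespace PlaneTree

/-- total number of vertices -/
def numVertices : PlaneTree → ℕ
  | node ts => 1 + (ts.attach.map (fun t => numVertices t.1)).sum
decreasing_by simp only [PlaneTree.node.sizeOf_spec]; exact Nat.lt_add_left 1 (List.sizeOf_lt_of_mem t.2)

/-- number of internal vertices (vertices with at least one child) -/
def numInternal : PlaneTree → ℕ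
  | node ts => (if ts.isEmpty then 0 else 1) + (ts.attach.map (fun t => numInternal t.1)).sum
decreasing_by simp only [PlaneTree.node.sizeOf_spec]; exact Nat.lt_add_left 1 (List.sizeOf_lt_of_mem t.2)

/-- product of `g h_v` over all internal vertices `v`, where `h_v` is the number of
internal vertices of the subtree rooted at `v` -/
def internalHookProd {α : Type} [CommMonoid α] (g : ℕ → α) : PlaneTree → α
  | node ts =>
    (if ts.isEmpty then 1 else g (numInternal (node ts))) *
      (ts.attach.map (fun t => internalHookProd g t.1)).prod
decreasing_by simp only [PlaneTree.node.sizeOf_spec]; exact Nat.lt_add_left 1 (List.sizeOf_lt_of_mem t.2)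

/-- product of `g h_v` over all vertices `v`, where `h_v` is the number of
vertices of the subtree rooted at `v` -/
def vertexHookProd {α : Type} [CommMonoid α] (g : ℕ → α) : PlaneTree → α
  | node ts =>
    g (numVertices (node ts)) * (ts.attach.map (fun t => vertexHookProd g t.1)).prod
decreasing_by simp only [PlaneTree.node.sizeOf_spec]; exact Nat.lt_add_left 1 (List.sizeOf_lt_of_mem t.2)

/-- every internal vertex has exactly `a` children -/
def IsFullAry (a : ℕ) : PlaneTree → Prop
  | node ts => (ts.length = 0 ∨ ts.length = a) ∧ ∀ t ∈ ts, IsFullAry a t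

/-- `IsKMAry k m b T`: with the root of `T` viewed as being on a level of parity `b`
(`b = false` meaning even), every vertex on an even level has `k` children and
every vertex on an odd level has `m` or `0` children. -/
def IsKMAry (k m : ℕ) : Bool → PlaneTree → Prop
  | b, node ts =>
    (if b then ts.length = m ∨ ts.length = 0 else ts.length = k) ∧
      ∀ t ∈ ts, IsKMAry k m (!b) t

/-- number of vertices on levels of parity `b`, the root having parity `cur` -/
def parityVertices (b cur : Bool) : PlaneTree → ℕ
  | node ts =>
    (if cur = b then 1 else 0) + (ts.attach.map (fun t => parityVertices b (!cur) t.1)).sum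
termination_by T => sizeOf T
decreasing_by simp only [PlaneTree.node.sizeOf_spec]; exact Nat.lt_add_left 1 (List.sizeOf_lt_of_mem t.2)

/-- number of internal vertices on levels of parity `b`, the root having parity `cur` -/
def parityInternal (b cur : Bool) : PlaneTree → ℕ
  | node ts =>
    (if cur = b ∧ ¬ts.isEmpty then 1 else 0) +
      (ts.attach.map (fun t => parityInternal b (!cur) t.1)).sum
termination_by T => sizeOf T
decreasing_by simp only [PlaneTree.node.sizeOf_spec]; exact Nat.lt_add_left 1 (List.sizeOf_lt_of_mem t.2)

/-- the order of a `(k,m)`-ary tree: the number of internal (crucial) vertices on odd levels -/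
def kmOrder (T : PlaneTree) : ℕ := parityInternal true false T

end PlaneTree


namespace HookAux

open PlaneTree

noncomputable instance : DecidableEq PlaneTree := Classical.decEq _

lemma numVertices_node (ts : List PlaneTree) :
    numVertices (node ts) = 1 + (ts.map numVertices).sum := by
  rw [numVertices]
  congr 1
  rw [List.attach_map_val]

lemma vhp_node (q : ℕ → ℚ) (ts : List PlaneTree) :
    vertexHookProd q (node ts)
      = q (numVertices (node ts)) * (ts.map (vertexHookProd q)).prod := by
  rw [vertexHookProd]
  congr 1
  rw [List.attach_map_val]

lemma numVertices_pos (T : PlaneTree) : 1 ≤ numVertices T := by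
  cases T with
  | node ts => rw [numVertices_node]; omega

noncomputable def forestFinset : ℕ → Finset (List PlaneTree)
  | 0 => {[]}
  | (n+1) => (Finset.range (n+1)).biUnion fun j =>
      ((forestFinset (min j n)) ×ˢ forestFinset (n - j)).image
        (fun p => PlaneTree.node p.1 :: p.2)
  termination_by n => n
  decreasing_by all_goals omega

lemma mem_forestFinset : ∀ (n : ℕ) (F : List PlaneTree),
    F ∈ forestFinset n ↔ (F.map numVertices).sum = n := by
  intro n
  induction n using Nat.strong_induction_on with
  | _ n ih =>
    intro F
    match n with
    | 0 =>
      rw [forestFinset]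
      simp only [Finset.mem_singleton]
      constructor
      · rintro rfl; simp
      · intro h
        cases F with
        | nil => rfl
        | cons T G =>
          exfalso
          simp only [List.map_cons, List.sum_cons] at h
          have := numVertices_pos T
          omega
    | (n+1) =>
      rw [forestFinset]
      simp only [Finset.mem_biUnion, Finset.mem_image, Finset.mem_range,
        Finset.mem_product, Prod.exists]
      constructor
      · rintro ⟨j, hj, ts, G, ⟨hts, hG⟩, rfl⟩
        have hjn : j ≤ n := by omega
        rw [min_eq_left hjn] at hts
        rw [ih j (by omega) ts] at hts
        rw [ih (n - j) (by omega) G] at hG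
        simp only [List.map_cons, List.sum_cons, numVertices_node, hts, hG]
        omega
      · intro h
        cases F with
        | nil => simp at h
        | cons T G =>
          cases T with
          | node ts =>
            simp only [List.map_cons, List.sum_cons, numVertices_node] at h
            refine ⟨(ts.map numVertices).sum, by omega, ts, G, ⟨?_, ?_⟩, rfl⟩
            · rw [min_eq_left (by omega), ih _ (by omega)]
            · rw [ih _ (by omega)]
              omega

noncomputable def vhp : PlaneTree → ℚ := vertexHookProd (fun h => 1 / (h : ℚ))

noncomputable def f (n : ℕ) : ℚ := ∑ F ∈ forestFinset n, (F.map vhp).prod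

lemma f_zero : f 0 = 1 := by
  rw [f, forestFinset]
  simp

lemma sum_tree (j : ℕ) :
    ∑ ts ∈ forestFinset j, vhp (PlaneTree.node ts)
      = (1 / ((j : ℚ) + 1)) * f j := by
  rw [f, Finset.mul_sum]
  refine Finset.sum_congr rfl fun ts hts => ?_
  rw [mem_forestFinset] at hts
  rw [vhp, vhp_node, numVertices_node, hts]
  congr 1
  push_cast
  rw [add_comm]

lemma f_succ (n : ℕ) :
    f (n + 1) = ∑ j ∈ Finset.range (n + 1),
      (1 / ((j : ℚ) + 1)) * f j * f (n - j) := by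
  rw [f, forestFinset]
  rw [Finset.sum_biUnion]
  · refine Finset.sum_congr rfl fun j hj => ?_
    rw [Finset.mem_range] at hj
    rw [min_eq_left (by omega : j ≤ n)]
    rw [Finset.sum_image]
    · rw [Finset.sum_product]
      have : ∀ ts ∈ forestFinset j, ∀ G ∈ forestFinset (n - j),
          (((PlaneTree.node ts :: G).map vhp).prod)
            = vhp (PlaneTree.node ts) * (G.map vhp).prod := by
        intro ts _ G _; simp
      calc (∑ ts ∈ forestFinset j, ∑ G ∈ forestFinset (n - j),
              (((PlaneTree.node ts :: G).map vhp).prod))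
          = ∑ ts ∈ forestFinset j, ∑ G ∈ forestFinset (n - j),
              vhp (PlaneTree.node ts) * (G.map vhp).prod := by
            refine Finset.sum_congr rfl fun ts hts => Finset.sum_congr rfl fun G hG => ?_
            exact this ts hts G hG
        _ = (∑ ts ∈ forestFinset j, vhp (PlaneTree.node ts)) * f (n - j) := by
            rw [Finset.sum_mul]
            exact Finset.sum_congr rfl fun ts _ => by rw [← Finset.mul_sum]; rfl
        _ = (1 / ((j : ℚ) + 1)) * f j * f (n - j) := by rw [sum_tree]
    · intro p _ q _ h
      simp only [List.cons.injEq, PlaneTree.node.injEq] at h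
      exact Prod.ext h.1 h.2
  · intro i hi j hj hij
    rw [Finset.mem_coe, Finset.mem_range] at hi hj
    simp only [Finset.disjoint_left]
    rintro F hFi hFj
    simp only [Finset.mem_image, Finset.mem_product, Prod.exists] at hFi hFj
    obtain ⟨ts, G, ⟨hts, -⟩, hF⟩ := hFi
    obtain ⟨ts', G', ⟨hts', -⟩, hF'⟩ := hFj
    rw [min_eq_left (by omega : i ≤ n), mem_forestFinset] at hts
    rw [min_eq_left (by omega : j ≤ n), mem_forestFinset] at hts'
    rw [← hF'] at hF
    simp only [List.cons.injEq, PlaneTree.node.injEq] at hF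
    exact hij (by rw [← hts, ← hts', hF.1])

noncomputable def c (n : ℕ) : ℚ := (∏ i ∈ Finset.range n, ((2*i+1 : ℕ) : ℚ)) / n.factorial

lemma c_zero : c 0 = 1 := by simp [c]

lemma c_one : c 1 = 1 := by simp [c]

lemma crec (n : ℕ) : ((n : ℚ) + 1) * c (n+1) = (2*(n:ℚ)+1) * c n := by
  have h1 : (n.factorial : ℚ) ≠ 0 := Nat.cast_ne_zero.mpr n.factorial_ne_zero
  have h2 : ((n+1).factorial : ℚ) ≠ 0 := Nat.cast_ne_zero.mpr (n+1).factorial_ne_zero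
  rw [c, c, Finset.prod_range_succ, Nat.factorial_succ]
  field_simp
  push_cast
  ring

lemma sym_w (M : ℕ) :
    ∑ j ∈ Finset.range (M+1), ((M : ℚ) - j) * (c j * c (M-j))
      = ∑ j ∈ Finset.range (M+1), (j : ℚ) * (c j * c (M-j)) := by
  rw [← Finset.sum_range_reflect (fun j => (j : ℚ) * (c j * c (M-j))) (M+1)]
  refine Finset.sum_congr rfl fun j hj => ?_
  rw [Finset.mem_range] at hj
  have hjM : j ≤ M := by omega
  have h1 : M + 1 - 1 - j = M - j := by omega
  have h2 : M - (M - j) = j := by omega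
  rw [h1, h2, Nat.cast_sub hjM]
  ring

lemma w_eq (M : ℕ) :
    2 * ∑ j ∈ Finset.range (M+1), (j : ℚ) * (c j * c (M-j))
      = (M : ℚ) * ∑ j ∈ Finset.range (M+1), c j * c (M-j) := by
  rw [two_mul]
  nth_rewrite 1 [← sym_w]
  rw [← Finset.sum_add_distrib, Finset.mul_sum]
  refine Finset.sum_congr rfl fun j hj => ?_
  ring

lemma P : ∀ m, ∑ j ∈ Finset.range (m+1), c j * c (m-j) = 2^m := by
  intro m
  induction m with
  | zero => simp [c]
  | succ m ih =>
    have shift : ∑ j ∈ Finset.range (m+2), (j : ℚ) * (c j * c (m+1-j))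
        = ∑ i ∈ Finset.range (m+1), ((2*(i:ℚ)+1) * c i) * c (m-i) := by
      rw [Finset.sum_range_succ' (fun j => (j : ℚ) * (c j * c (m+1-j))) (m+1)]
      simp only [Nat.cast_zero, zero_mul, add_zero]
      refine Finset.sum_congr rfl fun i hi => ?_
      rw [Finset.mem_range] at hi
      have h1 : m + 1 - (i + 1) = m - i := by omega
      rw [h1]
      push_cast
      rw [show ((i:ℚ)+1) * (c (i+1) * c (m-i)) = (((i:ℚ)+1) * c (i+1)) * c (m-i) by ring,
        crec]
    have key : ((m : ℚ) + 1) * ∑ j ∈ Finset.range (m+2), c j * c (m+1-j)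
        = ((m : ℚ) + 1) * (2 * 2^m) := by
      have := w_eq (m+1)
      push_cast at this
      rw [← this, shift]
      have expand : ∑ i ∈ Finset.range (m+1), ((2*(i:ℚ)+1) * c i) * c (m-i)
          = 2 * (∑ i ∈ Finset.range (m+1), (i:ℚ) * (c i * c (m-i)))
            + ∑ i ∈ Finset.range (m+1), c i * c (m-i) := by
        rw [Finset.mul_sum, ← Finset.sum_add_distrib]
        exact Finset.sum_congr rfl fun i _ => by ring
      rw [expand, w_eq m, ih]
      ring
    have hm : ((m : ℚ) + 1) ≠ 0 := by positivity
    have := mul_left_cancel₀ hm key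
    rw [this]
    ring

lemma tmul (j : ℕ) (x : ℚ) : ((j:ℚ)+1) * (c j / ((j:ℚ)+1) * x) = c j * x := by
  have : ((j:ℚ)+1) ≠ 0 := by positivity
  field_simp

lemma S : ∀ n, ∑ j ∈ Finset.range (n+1), c j / ((j:ℚ)+1) * c (n-j) = c (n+1) := by
  intro n
  induction n with
  | zero => norm_num [c]
  | succ n ih =>
    set s1 := ∑ j ∈ Finset.range (n+2), c j / ((j:ℚ)+1) * c (n+1-j) with hs1
    have first : ∑ j ∈ Finset.range (n+2), ((j:ℚ)+1) * (c j / ((j:ℚ)+1) * c (n+1-j))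
        = 2^(n+1) := by
      rw [← P (n+1)]
      exact Finset.sum_congr rfl fun j _ => tmul j _
    have B : ∑ j ∈ Finset.range (n+1), (((n:ℚ)-j)) * (c j / ((j:ℚ)+1) * c (n-j))
        = ((n:ℚ)+1) * c (n+1) - 2^n := by
      have : ∀ j ∈ Finset.range (n+1),
          (((n:ℚ)-j)) * (c j / ((j:ℚ)+1) * c (n-j))
            = ((n:ℚ)+1) * (c j / ((j:ℚ)+1) * c (n-j))
              - ((j:ℚ)+1) * (c j / ((j:ℚ)+1) * c (n-j)) := by
        intro j _; ring
      rw [Finset.sum_congr rfl this, Finset.sum_sub_distrib, ← Finset.mul_sum, ih]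
      congr 1
      rw [← P n]
      exact Finset.sum_congr rfl fun j _ => tmul j _
    have second : ∑ j ∈ Finset.range (n+2), (((n:ℚ)+1)-(j:ℚ)) * (c j / ((j:ℚ)+1) * c (n+1-j))
        = 2 * (((n:ℚ)+1) * c (n+1) - 2^n) + c (n+1) := by
      rw [Finset.sum_range_succ]
      have hlast : (((n:ℚ)+1)-((n+1:ℕ):ℚ)) * (c (n+1) / (((n+1:ℕ):ℚ)+1) * c (n+1-(n+1))) = 0 := by
        push_cast; ring
      rw [hlast, add_zero]
      have step : ∀ j ∈ Finset.range (n+1),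
          (((n:ℚ)+1)-(j:ℚ)) * (c j / ((j:ℚ)+1) * c (n+1-j))
            = 2 * (((n:ℚ)-j) * (c j / ((j:ℚ)+1) * c (n-j)))
              + c j / ((j:ℚ)+1) * c (n-j) := by
        intro j hj
        rw [Finset.mem_range] at hj
        have h1 : n + 1 - j = (n - j) + 1 := by omega
        have h2 : ((n:ℚ) - (j:ℚ)) = ((n - j : ℕ) : ℚ) := by
          rw [Nat.cast_sub (by omega)]
        rw [h1]
        have := crec (n - j)
        calc (((n:ℚ)+1)-(j:ℚ)) * (c j / ((j:ℚ)+1) * c ((n-j)+1))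
            = (c j / ((j:ℚ)+1)) * ((((n-j:ℕ):ℚ)+1) * c ((n-j)+1)) := by
              rw [← h2]; ring
          _ = (c j / ((j:ℚ)+1)) * ((2*((n-j:ℕ):ℚ)+1) * c (n-j)) := by rw [this]
          _ = 2 * (((n:ℚ)-j) * (c j / ((j:ℚ)+1) * c (n-j)))
              + c j / ((j:ℚ)+1) * c (n-j) := by rw [h2]; ring
      rw [Finset.sum_congr rfl step, Finset.sum_add_distrib, ih, ← Finset.mul_sum, B]
    have key : ((n:ℚ)+2) * s1 = ((n:ℚ)+2) * c (n+2) := by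
      have expand : ((n:ℚ)+2) * s1
          = ∑ j ∈ Finset.range (n+2), ((j:ℚ)+1) * (c j / ((j:ℚ)+1) * c (n+1-j))
            + ∑ j ∈ Finset.range (n+2), (((n:ℚ)+1)-(j:ℚ)) * (c j / ((j:ℚ)+1) * c (n+1-j)) := by
        rw [hs1, Finset.mul_sum, ← Finset.sum_add_distrib]
        exact Finset.sum_congr rfl fun j _ => by ring
      rw [expand, first, second]
      have := crec (n+1)
      push_cast at this ⊢
      rw [show ((n:ℚ)+2) * c (n+2) = ((n:ℚ)+1+1) * c (n+1+1) by ring_nf]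
      rw [this]
      ring
    have hm : ((n:ℚ)+2) ≠ 0 := by positivity
    exact mul_left_cancel₀ hm key

lemma f_eq_c : ∀ n, f n = c n := by
  intro n
  induction n using Nat.strong_induction_on with
  | _ n ih =>
    match n with
    | 0 => rw [f_zero, c_zero]
    | (n+1) =>
      rw [f_succ, ← S n]
      refine Finset.sum_congr rfl fun j hj => ?_
      rw [Finset.mem_range] at hj
      rw [ih j (by omega), ih (n-j) (by omega)]
      ring

lemma finsum_eq_f (n : ℕ) :
    (∑ᶠ F : {F : List PlaneTree // (F.map PlaneTree.numVertices).sum = n},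
        (F.1.map (PlaneTree.vertexHookProd (fun h => 1 / (h : ℚ)))).prod) = f n := by
  have h1 := finsum_set_coe_eq_finsum_mem
    (s := {F : List PlaneTree | (F.map PlaneTree.numVertices).sum = n})
    (f := fun F => (F.map (PlaneTree.vertexHookProd (fun h => 1 / (h : ℚ)))).prod)
  have hset : {F : List PlaneTree | (F.map PlaneTree.numVertices).sum = n}
      = ↑(forestFinset n) := Set.ext fun F => by
    rw [Finset.mem_coe, mem_forestFinset]; rfl
  have h2 : (∑ᶠ F ∈ {F : List PlaneTree | (F.map PlaneTree.numVertices).sum = n},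
      (F.map (PlaneTree.vertexHookProd (fun h => 1 / (h : ℚ)))).prod)
      = ∑ F ∈ forestFinset n, (F.map (PlaneTree.vertexHookProd (fun h => 1 / (h : ℚ)))).prod := by
    rw [hset, finsum_mem_coe_finset]
  exact h1.trans h2

end HookAux

/-- `n! · Σ_{F∈F(n)} Π_{v∈V(F)} 1/h_v = (2n-1)!! = Π_{i=0}^{n-1}(2i+1)`, summed over plane
forests with `n` vertices. -/
theorem hook_reciprocal_sum_forests (n : ℕ) :
    (n.factorial : ℚ) *
      ∑ᶠ F : {F : List PlaneTree // (F.map PlaneTree.numVertices).sum = n},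
        (F.1.map (PlaneTree.vertexHookProd (fun h => 1 / (h : ℚ)))).prod
      = ∏ i ∈ Finset.range n, ((2 * i + 1 : ℕ) : ℚ) := by
  rw [HookAux.finsum_eq_f, HookAux.f_eq_c, HookAux.c]
  have h1 : (n.factorial : ℚ) ≠ 0 := Nat.cast_ne_zero.mpr n.factorial_ne_zero
  field_simp
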